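/- (Case i = n+2) For 0 ≤ s < n, D_{n+2}(Q_{n,s}) = (-1)^n Q_{n,0} ( Q_{n,s-2}^{p^2} − Q_{n,s-1}^p Q_{n,n-1}^{p^2} + (Q_{n,n-1}^{p^2+p} − Q_{n,n-2}^{p^2}) Q_{n,s} ), with Q_{n,t} = 0 for t < 0. -/

import Mathlib

open MvPolynomial Matrix Finset
set_option linter.unusedSectionVars false
set_option maxHeartbeats 1600000

/-- `[e₁,…,eₙ]`: the determinant of the matrix with `(k,j)`-entry `x_j^{p^{e_k}}`. -/
noncomputable def bracket (p n : ℕ) (e : Fin n → ℕ) : MvPolynomial (Fin n) (ZMod p) :=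
  (Matrix.of fun k j : Fin n => (X j : MvPolynomial (Fin n) (ZMod p)) ^ p ^ (e k)).det

/-- `L_n = [0,1,…,n-1]`. -/
noncomputable def Ln (p n : ℕ) : MvPolynomial (Fin n) (ZMod p) :=
  bracket p n (fun k => (k : ℕ))

/-- `L_{n,s} = [0,1,…,ŝ,…,n]` (entry `s` omitted from `0,…,n`). -/
noncomputable def Lns (p n s : ℕ) : MvPolynomial (Fin n) (ZMod p) :=
  bracket p n (fun k => if (k : ℕ) < s then (k : ℕ) else (k : ℕ) + 1)

/-- The `i`-th primitive Steenrod–Milnor operation, as the `F_p`-derivation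
with `D_i(x_j) = x_j^{p^i}`. -/
noncomputable def Dop (p n i : ℕ) :
    Derivation (ZMod p) (MvPolynomial (Fin n) (ZMod p)) (MvPolynomial (Fin n) (ZMod p)) :=
  MvPolynomial.mkDerivation (ZMod p) (fun j : Fin n => (X j) ^ p ^ i)

/-- The action of a matrix `g` on `P_n` by linear substitution of the variables. -/
noncomputable def act (p n : ℕ) (g : Matrix (Fin n) (Fin n) (ZMod p)) :
    MvPolynomial (Fin n) (ZMod p) →ₐ[ZMod p] MvPolynomial (Fin n) (ZMod p) :=
  MvPolynomial.aeval (fun j : Fin n => ∑ k : Fin n, g j k • (X k : MvPolynomial (Fin n) (ZMod p)))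

section Aux
variable (p n : ℕ) [Fact p.Prime]
local notation "R" => MvPolynomial (Fin n) (ZMod p)

lemma bracket_expand (e : Fin n → ℕ) :
    bracket p n e = ∑ σ : Equiv.Perm (Fin n),
      ((Equiv.Perm.sign σ : ℤ) : R) * ∏ i, (X (σ i) : R) ^ p ^ e i := by
  have h : bracket p n e
      = ((Matrix.of fun k j : Fin n => (X j : R) ^ p ^ (e k)).transpose).det := by
    rw [Matrix.det_transpose]; rfl
  rw [h, Matrix.det_apply]
  refine Finset.sum_congr rfl fun σ _ => ?_
  rw [Units.smul_def, zsmul_eq_mul]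
  rfl

lemma dop_X (i : ℕ) (j : Fin n) : Dop p n i (X j) = X j ^ p ^ i := by
  simp [Dop, mkDerivation_X]

lemma dop_X_pow (i e : ℕ) (he : 0 < e) (j : Fin n) : Dop p n i ((X j : R) ^ p ^ e) = 0 := by
  obtain ⟨e', rfl⟩ : ∃ e', e = e' + 1 := ⟨e - 1, by omega⟩
  rw [pow_succ, pow_mul, Derivation.leibniz_pow]
  have : (p : R) = 0 := CharP.cast_eq_zero R p
  simp [nsmul_eq_mul, this]

lemma dop_prod_eq_zero {ι : Type*} (D : Derivation (ZMod p) R R) (s : Finset ι) (f : ι → R)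
    (h : ∀ i ∈ s, D (f i) = 0) : D (∏ i ∈ s, f i) = 0 := by
  classical
  induction s using Finset.induction_on with
  | empty => simp
  | insert _ _ hx ih =>
    rw [Finset.prod_insert hx, Derivation.leibniz]
    rw [h _ (Finset.mem_insert_self _ _), ih (fun i hi => h _ (Finset.mem_insert_of_mem hi))]
    simp

lemma dop_bracket (i : ℕ) (z : Fin n) (e : Fin n → ℕ) (hz : e z = 0)
    (hk : ∀ k, k ≠ z → 0 < e k) :
    Dop p n i (bracket p n e) = bracket p n (Function.update e z i) := by
  rw [bracket_expand, bracket_expand, map_sum]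
  refine Finset.sum_congr rfl fun σ _ => ?_
  have hc : Dop p n i (((Equiv.Perm.sign σ : ℤ) : R) * ∏ k, (X (σ k):R) ^ p ^ e k)
      = ((Equiv.Perm.sign σ : ℤ) : R) * Dop p n i (∏ k, (X (σ k):R) ^ p ^ e k) := by
    rw [Derivation.leibniz, Derivation.map_intCast]
    simp [smul_eq_mul]
  rw [hc]
  congr 1
  have hsplit : (∏ k, (X (σ k):R) ^ p ^ e k)
      = (X (σ z):R) ^ p ^ e z * ∏ k ∈ univ.erase z, (X (σ k):R) ^ p ^ e k :=
    (Finset.mul_prod_erase univ _ (mem_univ z)).symm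
  rw [hsplit, Derivation.leibniz,
    dop_prod_eq_zero p n _ _ _
      (fun k hks => dop_X_pow p n i _ (hk k (Finset.ne_of_mem_erase hks)) _),
    hz, pow_zero, pow_one, dop_X]
  rw [smul_zero, zero_add, smul_eq_mul]
  have hR : (∏ k, (X (σ k):R) ^ p ^ (Function.update e z i k))
      = (X (σ z):R) ^ p ^ i * ∏ k ∈ univ.erase z, (X (σ k):R) ^ p ^ e k := by
    rw [← Finset.mul_prod_erase univ _ (mem_univ z), Function.update_self]
    congr 1
    refine Finset.prod_congr rfl fun k hk' => ?_
    rw [Function.update_of_ne (Finset.ne_of_mem_erase hk')]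
  rw [hR]
  ring

lemma bracket_dup (e : Fin n → ℕ) (k l : Fin n) (hkl : k ≠ l) (h : e k = e l) :
    bracket p n e = 0 := by
  apply Matrix.det_zero_of_row_eq hkl
  funext j
  simp [h]

lemma bracket_perm (e : Fin n → ℕ) (σ : Equiv.Perm (Fin n)) :
    bracket p n (fun k => e (σ k)) = ((Equiv.Perm.sign σ : ℤ) : R) * bracket p n e := by
  have := Matrix.det_permute σ (Matrix.of fun k j : Fin n => (X j : R) ^ p ^ (e k))
  exact this

lemma bracket_cycle (e f : Fin n → ℕ) (t : Fin n)
    (h : ∀ k, f k = e (Fin.cycleRange t k)) :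
    bracket p n e = (-1 : R) ^ (t : ℕ) * bracket p n f := by
  have hf : f = fun k => e (Fin.cycleRange t k) := funext h
  have h2 := bracket_perm p n e (Fin.cycleRange t)
  rw [← hf, Fin.sign_cycleRange] at h2
  have h3 : (((((-1 : ℤˣ) ^ (t : ℕ)) : ℤˣ) : ℤ) : R) = (-1 : R) ^ (t : ℕ) := by push_cast; ring
  rw [h3] at h2
  rw [h2, ← mul_assoc, ← pow_add]
  have : Even ((t : ℕ) + (t : ℕ)) := ⟨t, rfl⟩
  rw [this.neg_one_pow, one_mul]

lemma bracket_frob (e : Fin n → ℕ) :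
    bracket p n (fun k => e k + 1) = bracket p n e ^ p := by
  haveI : ExpChar R p := ExpChar.prime Fact.out
  have h : bracket p n e ^ p
      = ((frobenius R p).mapMatrix (Matrix.of fun k j : Fin n => (X j : R) ^ p ^ (e k))).det := by
    rw [← RingHom.map_det]; rfl
  rw [h]
  unfold bracket
  congr 1
  refine Matrix.ext fun k j => ?_
  simp only [RingHom.mapMatrix_apply, Matrix.map_apply, Matrix.of_apply, frobenius_def,
    pow_succ, pow_mul]

lemma det_updateRow_lin (M : Matrix (Fin n) (Fin n) R) (z : Fin n) (c : Fin n → R)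
    (v : Fin n → Fin n → R) :
    (M.updateRow z (∑ t, c t • v t)).det = ∑ t, c t * (M.updateRow z (v t)).det := by
  classical
  suffices h : ∀ s : Finset (Fin n),
      (M.updateRow z (∑ t ∈ s, c t • v t)).det = ∑ t ∈ s, c t * (M.updateRow z (v t)).det from
    h univ
  intro s
  induction s using Finset.induction_on with
  | empty =>
    simp only [Finset.sum_empty]
    exact Matrix.det_eq_zero_of_row_eq_zero z (fun j => by simp)
  | insert _ _ hx ih =>
    rw [Finset.sum_insert hx, Matrix.det_updateRow_add, Matrix.det_updateRow_smul, ih,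
      Finset.sum_insert hx]

lemma bracket_row_subst (e : Fin n → ℕ) (z : Fin n) (c : Fin n → R) (g : Fin n → ℕ)
    (h : ∀ j : Fin n, (X j : R) ^ p ^ (e z) = ∑ t, c t * (X j : R) ^ p ^ (g t)) :
    bracket p n e = ∑ t, c t * bracket p n (Function.update e z (g t)) := by
  set M : Matrix (Fin n) (Fin n) R := Matrix.of fun k j : Fin n => (X j : R) ^ p ^ e k with hM
  have hMz : M = M.updateRow z (∑ t, c t • fun j : Fin n => (X j : R) ^ p ^ (g t)) := by
    have : (∑ t, c t • fun j : Fin n => (X j : R) ^ p ^ (g t)) = M z := by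
      funext j
      rw [Finset.sum_apply]
      simp only [Pi.smul_apply, smul_eq_mul]
      exact (h j).symm
    rw [this, Matrix.updateRow_eq_self]
  have step : bracket p n e = (M.updateRow z (∑ t, c t • fun j : Fin n => (X j : R) ^ p ^ (g t))).det := by
    rw [← hMz]; rfl
  rw [step, det_updateRow_lin]
  refine Finset.sum_congr rfl fun t _ => ?_
  congr 1
  unfold bracket
  congr 1
  refine Matrix.ext fun k j => ?_
  by_cases hkz : k = z
  · subst hkz
    rw [Matrix.updateRow_self]
    simp [Function.update_self]
  · rw [Matrix.updateRow_ne hkz]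
    simp [hM, Function.update_of_ne hkz]

lemma Ln_ne_zero : Ln p n ≠ 0 := by
  have hp2 : 2 ≤ p := (Fact.out : p.Prime).two_le
  set d : Fin n →₀ ℕ := Finsupp.equivFunOnFinite.symm fun j : Fin n => p ^ (j:ℕ) with hd
  have hu : ∀ σ : Equiv.Perm (Fin n), ∏ i, (X (σ i) : R) ^ p ^ (i:ℕ)
      = monomial (Finsupp.equivFunOnFinite.symm fun j : Fin n => p ^ ((σ⁻¹ j : Fin n):ℕ)) 1 := by
    intro σ
    set u : Fin n →₀ ℕ := Finsupp.equivFunOnFinite.symm fun j : Fin n => p ^ ((σ⁻¹ j : Fin n):ℕ)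
      with hu'
    have hcoe : ∀ j, u j = p ^ ((σ⁻¹ j : Fin n):ℕ) := fun j => rfl
    calc ∏ i, (X (σ i) : R) ^ p ^ (i:ℕ)
        = ∏ i, (fun j => (X j : R) ^ u j) (σ i) := by
          refine Finset.prod_congr rfl fun i _ => ?_
          simp [hcoe, Equiv.Perm.inv_def]
      _ = ∏ j, (X j : R) ^ u j := Equiv.prod_comp σ (fun j => (X j : R) ^ u j)
      _ = ∏ j ∈ u.support, (X j : R) ^ u j := by
          refine (Finset.prod_subset (Finset.subset_univ _) fun x _ hx => ?_).symm
          rw [Finsupp.notMem_support_iff.mp hx, pow_zero]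
      _ = monomial u 1 := prod_X_pow_eq_monomial
  have key : coeff d (Ln p n) = 1 := by
    rw [Ln, bracket_expand, coeff_sum]
    have hterm : ∀ σ : Equiv.Perm (Fin n),
        coeff d (((Equiv.Perm.sign σ : ℤ) : R) * ∏ i, (X (σ i) : R) ^ p ^ (i:ℕ))
        = if σ = 1 then 1 else 0 := by
      intro σ
      rw [hu σ, ← map_intCast (C : ZMod p →+* R), coeff_C_mul, coeff_monomial]
      by_cases h1 : σ = 1
      · subst h1
        rw [if_pos, if_pos rfl]
        · simp
        · rfl
      · rw [if_neg, if_neg h1, mul_zero]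
        intro hcon
        apply h1
        have := Finsupp.equivFunOnFinite.symm.injective hcon
        have h2 : ∀ j, (σ⁻¹ j : Fin n) = j := by
          intro j
          have := congrFun this j
          exact Fin.val_injective (Nat.pow_right_injective hp2 this)
        have : σ⁻¹ = 1 := Equiv.ext fun j => h2 j
        rw [← inv_inv σ, this]; rfl
    rw [Finset.sum_congr rfl fun σ _ => hterm σ]
    simp
  intro h
  rw [h, coeff_zero] at key
  exact zero_ne_one key

lemma row_rel (j0 : Fin n) :
    (X j0 : R) ^ p ^ n * Ln p n
      = ∑ t : Fin n, (-1:R) ^ ((t:ℕ) + n + 1) * (Lns p n (t:ℕ) * X j0 ^ p ^ (t:ℕ)) := by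
  set A : Matrix (Fin (n+1)) (Fin (n+1)) R :=
    Matrix.of fun i j => (X (if h : (j:ℕ) < n then ⟨(j:ℕ), h⟩ else j0) : R) ^ p ^ (i:ℕ) with hA
  have hlastcol : ∀ i : Fin (n+1), A i (Fin.last n) = (X j0 : R) ^ p ^ (i:ℕ) := by
    intro i
    show (X (if h : ((Fin.last n : Fin (n+1)):ℕ) < n then ⟨_, h⟩ else j0) : R) ^ p ^ (i:ℕ) = _
    rw [dif_neg (by simp)]
  have hdet : A.det = 0 := by
    apply Matrix.det_zero_of_column_eq (Fin.castSucc_lt_last j0).ne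
    intro i
    rw [hlastcol i]
    show (X (if h : ((Fin.castSucc j0 : Fin (n+1)):ℕ) < n then ⟨_, h⟩ else j0) : R) ^ p ^ (i:ℕ) = _
    rw [dif_pos (by simpa using j0.isLt)]
    exact congrArg (· ^ p ^ (i:ℕ)) (congrArg X (Fin.ext (by simp)))
  have hminor : ∀ i : Fin (n+1), (A.submatrix i.succAbove (Fin.last n).succAbove).det
      = bracket p n (fun k => ((i.succAbove k : Fin (n+1)) : ℕ)) := by
    intro i
    rw [bracket]
    congr 1
    refine Matrix.ext fun k j => ?_
    rw [Matrix.submatrix_apply, Fin.succAbove_last]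
    show (X (if h : ((Fin.castSucc j : Fin (n+1)):ℕ) < n then ⟨_, h⟩ else j0) : R) ^ _ = _
    rw [dif_pos (by simpa using j.isLt)]
    rfl
  have hminor_last : bracket p n (fun k => (((Fin.last n).succAbove k : Fin (n+1)) : ℕ)) = Ln p n := by
    rw [Ln]; congr 1; funext k; rw [Fin.succAbove_last]; simp
  have hminor_cast : ∀ t : Fin n,
      bracket p n (fun k => (((Fin.castSucc t).succAbove k : Fin (n+1)) : ℕ)) = Lns p n (t:ℕ) := by
    intro t
    rw [Lns]; congr 1; funext k
    by_cases h : (k:ℕ) < (t:ℕ)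
    · rw [Fin.succAbove_of_castSucc_lt _ _ (Fin.castSucc_lt_castSucc_iff.mpr h),
        if_pos h]
      rfl
    · rw [Fin.succAbove_of_le_castSucc _ _ (Fin.castSucc_le_castSucc_iff.mpr (Nat.le_of_not_lt h)),
        if_neg h]
      rfl
  have hexp := Matrix.det_succ_column A (Fin.last n)
  rw [hdet] at hexp
  rw [Fin.sum_univ_castSucc] at hexp
  have hlast_term : (-1:R) ^ ((Fin.last n : Fin (n+1)) + (Fin.last n : Fin (n+1)) : ℕ)
        * A (Fin.last n) (Fin.last n)
        * (A.submatrix (Fin.last n).succAbove (Fin.last n).succAbove).det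
      = (X j0 : R) ^ p ^ n * Ln p n := by
    rw [hminor, hminor_last, hlastcol]
    have : Even (((Fin.last n : Fin (n+1)) : ℕ) + ((Fin.last n : Fin (n+1)) : ℕ)) := ⟨_, rfl⟩
    rw [this.neg_one_pow]
    simp [Fin.val_last]
  rw [hlast_term] at hexp
  have hsum : ∀ t : Fin n, (-1:R) ^ ((Fin.castSucc t : Fin (n+1)) + (Fin.last n : Fin (n+1)) : ℕ)
        * A (Fin.castSucc t) (Fin.last n)
        * (A.submatrix (Fin.castSucc t).succAbove (Fin.last n).succAbove).det
      = (-1:R) ^ ((t:ℕ) + n) * (Lns p n (t:ℕ) * X j0 ^ p ^ (t:ℕ)) := by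
    intro t
    rw [hminor, hminor_cast, hlastcol]
    simp only [Fin.coe_castSucc, Fin.val_last]
    ring
  rw [Finset.sum_congr rfl fun t _ => hsum t] at hexp
  have hflip : ∑ t : Fin n, (-1:R) ^ ((t:ℕ) + n + 1) * (Lns p n (t:ℕ) * X j0 ^ p ^ (t:ℕ))
      = -∑ t : Fin n, (-1:R) ^ ((t:ℕ) + n) * (Lns p n (t:ℕ) * X j0 ^ p ^ (t:ℕ)) := by
    rw [← Finset.sum_neg_distrib]
    exact Finset.sum_congr rfl fun t _ => by ring
  rw [hflip]
  linear_combination -hexp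

lemma sum_ite_shift (m k r : ℕ) (hk : 0 < k) (hr : r ≤ m) (B : R) :
    (∑ i ∈ Finset.range m, if i + k = r then B else 0) = if k ≤ r then B else 0 := by
  by_cases h : k ≤ r
  · rw [if_pos h,
      Finset.sum_congr rfl (fun i _ => if_congr (show (i + k = r) ↔ (i = r - k) by omega) rfl rfl),
      Finset.sum_ite_eq' (Finset.range m) (r-k) (fun _ => B),
      if_pos (Finset.mem_range.mpr (by omega))]
  · rw [if_neg h]
    exact Finset.sum_eq_zero fun i _ => if_neg (by omega)

end Aux
section Aux2
variable (p m : ℕ) [Fact p.Prime]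
local notation "R" => MvPolynomial (Fin (m+1)) (ZMod p)

lemma neg_one_pow_mod (a b : ℕ) (h : a % 2 = b % 2) : (-1:R)^a = (-1:R)^b := by
  rcases Nat.even_or_odd a with ha | ha
  · have ha' := Nat.even_iff.mp ha
    rw [ha.neg_one_pow, (Nat.even_iff.mpr (by omega : b % 2 = 0)).neg_one_pow]
  · have ha' := Nat.odd_iff.mp ha
    rw [ha.neg_one_pow, (Nat.odd_iff.mpr (by omega : b % 2 = 1)).neg_one_pow]

lemma sign_absorb (a b c : ℕ) (h : (a + b) % 2 = c % 2) (x y : R) :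
    (-1:R)^a * x * ((-1:R)^b * y) = (-1:R)^c * (x * y) := by
  have hs : (-1:R)^a * (-1:R)^b = (-1:R)^c := by
    rw [← pow_add]; exact neg_one_pow_mod p m _ _ h
  rw [show (-1:R)^a * x * ((-1:R)^b * y) = ((-1:R)^a * (-1:R)^b) * (x*y) from by ring, hs]

lemma bracket_insert (e' f : Fin (m+1) → ℕ) (pos : Fin (m+1))
    (h1 : ∀ k : Fin (m+1), (k:ℕ) < (pos:ℕ) → f k = e' (k+1))
    (h2 : f pos = e' 0)
    (h3 : ∀ k : Fin (m+1), (pos:ℕ) < (k:ℕ) → f k = e' k) :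
    bracket p (m+1) e' = (-1:R)^(pos:ℕ) * bracket p (m+1) f := by
  apply bracket_cycle
  intro k
  rcases lt_trichotomy k pos with hlt | heq | hgt
  · rw [Fin.cycleRange_of_lt hlt]; exact h1 k hlt
  · rw [heq, Fin.cycleRange_self]; exact h2
  · rw [Fin.cycleRange_of_gt hgt]; exact h3 k hgt

lemma fin_val_succ (k : Fin (m+1)) (h : (k:ℕ) < m) : ((k+1 : Fin (m+1)):ℕ) = (k:ℕ)+1 :=
  Fin.val_add_one_of_lt (by rw [Fin.lt_def, Fin.val_last]; exact h)

lemma fin_succ_ne_zero' (k : Fin (m+1)) (h : (k:ℕ) < m) : (k+1 : Fin (m+1)) ≠ 0 := by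
  intro hc
  have := fin_val_succ m k h
  rw [hc] at this
  simp at this

lemma fin_ne_zero_of_val_pos (k : Fin (m+1)) (h : 0 < (k:ℕ)) : k ≠ 0 := by
  intro hc; rw [hc] at h; simp at h

lemma DL_eval (Q : ℤ → R) (hQneg : ∀ t : ℤ, t < 0 → Q t = 0)
    (hrel2 : ∀ j0 : Fin (m+1), (X j0 : R) ^ p ^ (m+3)
      = ∑ t : Fin (m+1), ((-1:R) ^ ((t:ℕ)+m+2) * Q ((t:ℕ):ℤ) ^ p ^ 2) * X j0 ^ p ^ ((t:ℕ)+2)) :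
    Dop p (m+1) (m+3) (Ln p (m+1))
      = Q (m:ℤ) ^ p ^ 2 * ((-1:R) ^ m * (Lns p (m+1) m) ^ p)
        - Q ((m:ℤ)-1) ^ p ^ 2 * ((-1:R) ^ m * (Ln p (m+1)) ^ p) := by
  set QA : R := Q (m:ℤ) ^ p ^ 2 * ((-1:R) ^ m * (Lns p (m+1) m) ^ p) with hQA
  set QB : R := Q ((m:ℤ)-1) ^ p ^ 2 * ((-1:R) ^ m * (Ln p (m+1)) ^ p) with hQB
  have h0 : Dop p (m+1) (m+3) (Ln p (m+1))
      = bracket p (m+1) (Function.update (fun k : Fin (m+1) => (k:ℕ)) 0 (m+3)) := by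
    unfold Ln
    exact dop_bracket p (m+1) (m+3) 0 _ (by simp)
      (fun k hk => Nat.pos_of_ne_zero (fun h => hk (Fin.ext (by simp [h]))))
  rw [h0, bracket_row_subst p (m+1) _ 0
      (fun t : Fin (m+1) => (-1:R)^((t:ℕ)+m+2) * Q ((t:ℕ):ℤ) ^ p ^ 2)
      (fun t : Fin (m+1) => (t:ℕ)+2)
      (by intro j; rw [Function.update_self]; exact hrel2 j)]
  simp only [Function.update_idem]
  have hterm : ∀ t : Fin (m+1),
      (-1:R)^((t:ℕ)+m+2) * Q ((t:ℕ):ℤ) ^ p ^ 2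
        * bracket p (m+1) (Function.update (fun k : Fin (m+1) => (k:ℕ)) 0 ((t:ℕ)+2))
      = (if (t:ℕ)+1 = m+1 then QA else 0) + (if (t:ℕ)+2 = m+1 then -QB else 0) := by
    intro t
    set e' := Function.update (fun k : Fin (m+1) => (k:ℕ)) 0 ((t:ℕ)+2) with he'
    have hv0 : e' 0 = (t:ℕ)+2 := Function.update_self _ _ _
    have hv : ∀ k : Fin (m+1), k ≠ 0 → e' k = (k:ℕ) := fun k hk => Function.update_of_ne hk _ _
    rcases (show (t:ℕ)+1 = m+1 ∨ (t:ℕ)+2 = m+1 ∨ (t:ℕ)+2 < m+1 by omega) with ht | ht | ht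
    · -- t = m : row exponent m+2 = n+1, gives Lns m ^ p
      rw [if_pos ht, if_neg (by omega), add_zero]
      have hins := bracket_insert p m e'
          (fun k : Fin (m+1) => (if (k:ℕ) < m then (k:ℕ) else (k:ℕ)+1) + 1)
          ⟨m, by omega⟩
          (fun k hk => by
            show (if (k:ℕ) < m then (k:ℕ) else (k:ℕ)+1) + 1 = e' (k+1)
            rw [hv _ (fin_succ_ne_zero' m k hk), fin_val_succ m k hk,
              if_pos (show (k:ℕ) < m from hk)])
          (by rw [hv0]; show (if m < m then m else m+1) + 1 = (t:ℕ)+2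
              rw [if_neg (lt_irrefl m)]; omega)
          (fun k hk => by
            have := k.isLt
            exact absurd hk (by simp only []; omega))
      rw [show ((⟨m, by omega⟩ : Fin (m+1)) : ℕ) = m from rfl] at hins
      rw [hins, bracket_frob p (m+1) (fun k : Fin (m+1) => if (k:ℕ) < m then (k:ℕ) else (k:ℕ)+1),
        show bracket p (m+1) (fun k : Fin (m+1) => if (k:ℕ) < m then (k:ℕ) else (k:ℕ)+1)
          = Lns p (m+1) m from rfl]
      rw [sign_absorb p m ((t:ℕ)+m+2) m m (by omega), hQA]
      rw [show ((t:ℕ):ℤ) = (m:ℤ) from by omega]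
      ring
    · -- t = m-1 : row exponent m+1 = n, gives Ln ^ p
      rw [if_neg (by omega), if_pos ht, zero_add]
      have hins := bracket_insert p m e'
          (fun k : Fin (m+1) => (k:ℕ) + 1)
          ⟨m, by omega⟩
          (fun k hk => by
            show (k:ℕ) + 1 = e' (k+1)
            rw [hv _ (fin_succ_ne_zero' m (k:Fin (m+1)) hk), fin_val_succ m k hk])
          (by rw [hv0]; show m + 1 = (t:ℕ)+2; omega)
          (fun k hk => by
            have := k.isLt
            exact absurd hk (by simp only []; omega))
      rw [show ((⟨m, by omega⟩ : Fin (m+1)) : ℕ) = m from rfl] at hins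
      rw [hins, bracket_frob p (m+1) (fun k : Fin (m+1) => (k:ℕ)),
        show bracket p (m+1) (fun k : Fin (m+1) => (k:ℕ)) = Ln p (m+1) from rfl]
      rw [sign_absorb p m ((t:ℕ)+m+2) m (m+1) (by omega), hQB]
      rw [show ((t:ℕ):ℤ) = (m:ℤ)-1 from by omega]
      ring
    · -- duplicate row
      rw [if_neg (by omega), if_neg (by omega), add_zero]
      have hz : bracket p (m+1) e' = 0 := by
        apply bracket_dup p (m+1) e' 0 ⟨(t:ℕ)+2, ht⟩
        · intro hc
          have := congrArg Fin.val hc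
          simp at this
        · rw [hv0, hv _ (fin_ne_zero_of_val_pos m _ (by simp))]
      rw [hz, mul_zero]
  rw [Finset.sum_congr rfl (fun t _ => hterm t)]
  rw [Fin.sum_univ_eq_sum_range
      (fun i => (if i+1 = m+1 then QA else 0) + (if i+2 = m+1 then -QB else 0)) (m+1)]
  rw [Finset.sum_add_distrib,
    sum_ite_shift p (m+1) (m+1) 1 (m+1) one_pos (le_refl _) QA,
    sum_ite_shift p (m+1) (m+1) 2 (m+1) (by omega) (le_refl _) (-QB),
    if_pos (by omega : 1 ≤ m+1)]
  by_cases hm : 1 ≤ m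
  · rw [if_pos (by omega : 2 ≤ m+1)]; ring
  · have hm0 : m = 0 := by omega
    subst hm0
    rw [if_neg (by omega)]
    rw [hQB, show ((0:ℕ):ℤ) - 1 = (-1:ℤ) from by norm_num, hQneg (-1) (by norm_num),
      zero_pow (show p^2 ≠ 0 from by have := (Fact.out : p.Prime).two_le; positivity)]
    ring

end Aux2
section Aux3
variable (p m : ℕ) [Fact p.Prime]
local notation "R" => MvPolynomial (Fin (m+1)) (ZMod p)

lemma DLs_eval (s : ℕ) (hs1 : 1 ≤ s) (hs2 : s < m+1) (Q : ℤ → R)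
    (hQneg : ∀ t : ℤ, t < 0 → Q t = 0)
    (hrel2 : ∀ j0 : Fin (m+1), (X j0 : R) ^ p ^ (m+3)
      = ∑ t : Fin (m+1), ((-1:R) ^ ((t:ℕ)+m+2) * Q ((t:ℕ):ℤ) ^ p ^ 2) * X j0 ^ p ^ ((t:ℕ)+2)) :
    Dop p (m+1) (m+3) (Lns p (m+1) s)
      = (-1:R)^(m+1) * (Q ((s:ℤ)-2) ^ p ^ 2 * (Ln p (m+1))^p)
        + Q (m:ℤ) ^ p ^ 2 * ((-1:R)^m * (Lns p (m+1) (s-1))^p) := by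
  set QC : R := (-1:R)^(m+1) * (Q ((s:ℤ)-2) ^ p ^ 2 * (Ln p (m+1))^p) with hQC
  set QD : R := Q (m:ℤ) ^ p ^ 2 * ((-1:R)^m * (Lns p (m+1) (s-1))^p) with hQD
  have h0 : Dop p (m+1) (m+3) (Lns p (m+1) s)
      = bracket p (m+1)
          (Function.update (fun k : Fin (m+1) => if (k:ℕ) < s then (k:ℕ) else (k:ℕ)+1) 0 (m+3)) := by
    unfold Lns
    refine dop_bracket p (m+1) (m+3) 0 _ ?_ ?_
    · show (if ((0:Fin (m+1)):ℕ) < s then ((0:Fin (m+1)):ℕ) else ((0:Fin (m+1)):ℕ)+1) = 0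
      simp only [Fin.val_zero]
      exact if_pos (show 0 < s by omega)
    · intro k hk
      have hkpos : 0 < (k:ℕ) := Nat.pos_of_ne_zero (fun h => hk (Fin.ext (by simp [h])))
      show 0 < (if (k:ℕ) < s then (k:ℕ) else (k:ℕ)+1)
      split_ifs <;> omega
  rw [h0, bracket_row_subst p (m+1) _ 0
      (fun t : Fin (m+1) => (-1:R)^((t:ℕ)+m+2) * Q ((t:ℕ):ℤ) ^ p ^ 2)
      (fun t : Fin (m+1) => (t:ℕ)+2)
      (by intro j; rw [Function.update_self]; exact hrel2 j)]
  simp only [Function.update_idem]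
  have hterm : ∀ t : Fin (m+1),
      (-1:R)^((t:ℕ)+m+2) * Q ((t:ℕ):ℤ) ^ p ^ 2
        * bracket p (m+1)
            (Function.update (fun k : Fin (m+1) => if (k:ℕ) < s then (k:ℕ) else (k:ℕ)+1) 0 ((t:ℕ)+2))
      = (if (t:ℕ)+2 = s then QC else 0) + (if (t:ℕ)+1 = m+1 then QD else 0) := by
    intro t
    set e' := Function.update (fun k : Fin (m+1) => if (k:ℕ) < s then (k:ℕ) else (k:ℕ)+1) 0
      ((t:ℕ)+2) with he'
    have hv0 : e' 0 = (t:ℕ)+2 := Function.update_self _ _ _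
    have hv : ∀ k : Fin (m+1), k ≠ 0 → e' k = if (k:ℕ) < s then (k:ℕ) else (k:ℕ)+1 :=
      fun k hk => Function.update_of_ne hk _ _
    rcases (show (t:ℕ)+2 = s ∨ (t:ℕ)+1 = m+1
        ∨ ((t:ℕ)+2 < s) ∨ (s ≤ (t:ℕ)+1 ∧ (t:ℕ)+1 < m+1 ∧ (t:ℕ)+2 ≠ s) by omega)
      with ht | ht | ht | ht
    · -- row exponent = s : determinant is ± L^p
      rw [if_pos ht, if_neg (by omega), add_zero]
      have hins := bracket_insert p m e'
          (fun k : Fin (m+1) => (k:ℕ) + 1)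
          ⟨s-1, by omega⟩
          (fun k hk => by
            have hk' : (k:ℕ) < s-1 := hk
            show (k:ℕ) + 1 = e' (k+1)
            rw [hv _ (fin_succ_ne_zero' m k (by omega)), fin_val_succ m k (by omega),
              if_pos (by omega)])
          (by
            show ((⟨s-1, by omega⟩ : Fin (m+1)):ℕ) + 1 = e' 0
            rw [hv0]; show s-1+1 = (t:ℕ)+2; omega)
          (fun k hk => by
            have hk' : s-1 < (k:ℕ) := hk
            show (k:ℕ) + 1 = e' k
            rw [hv _ (fin_ne_zero_of_val_pos m _ (by omega)), if_neg (by omega)])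
      rw [show ((⟨s-1, by omega⟩ : Fin (m+1)) : ℕ) = s-1 from rfl] at hins
      rw [hins, bracket_frob p (m+1) (fun k : Fin (m+1) => (k:ℕ)),
        show bracket p (m+1) (fun k : Fin (m+1) => (k:ℕ)) = Ln p (m+1) from rfl]
      rw [sign_absorb p m ((t:ℕ)+m+2) (s-1) (m+1) (by omega), hQC]
      rw [show ((t:ℕ):ℤ) = (s:ℤ)-2 from by omega]
    · -- row exponent = m+2 : determinant is ± Lns (s-1) ^ p
      rw [if_neg (by omega), if_pos ht, zero_add]
      have hins := bracket_insert p m e'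
          (fun k : Fin (m+1) => (if (k:ℕ) < s-1 then (k:ℕ) else (k:ℕ)+1) + 1)
          ⟨m, by omega⟩
          (fun k hk => by
            have hk' : (k:ℕ) < m := hk
            show (if (k:ℕ) < s-1 then (k:ℕ) else (k:ℕ)+1) + 1 = e' (k+1)
            rw [hv _ (fin_succ_ne_zero' m k hk'), fin_val_succ m k hk']
            split_ifs <;> omega)
          (by
            show (if ((⟨m, by omega⟩ : Fin (m+1)):ℕ) < s-1
                then ((⟨m, by omega⟩ : Fin (m+1)):ℕ) else ((⟨m, by omega⟩ : Fin (m+1)):ℕ)+1) + 1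
              = e' 0
            rw [hv0]
            show (if m < s-1 then m else m+1) + 1 = (t:ℕ)+2
            rw [if_neg (by omega)]; omega)
          (fun k hk => by
            have hk' : m < (k:ℕ) := hk
            have := k.isLt
            omega)
      rw [show ((⟨m, by omega⟩ : Fin (m+1)) : ℕ) = m from rfl] at hins
      rw [hins, bracket_frob p (m+1) (fun k : Fin (m+1) => if (k:ℕ) < s-1 then (k:ℕ) else (k:ℕ)+1),
        show bracket p (m+1) (fun k : Fin (m+1) => if (k:ℕ) < s-1 then (k:ℕ) else (k:ℕ)+1)
          = Lns p (m+1) (s-1) from rfl]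
      rw [sign_absorb p m ((t:ℕ)+m+2) m m (by omega), hQD]
      rw [show ((t:ℕ):ℤ) = (m:ℤ) from by omega]
      ring
    · -- duplicate row, exponent t+2 < s
      rw [if_neg (by omega), if_neg (by omega), add_zero]
      have hz : bracket p (m+1) e' = 0 := by
        apply bracket_dup p (m+1) e' 0 ⟨(t:ℕ)+2, by omega⟩
        · intro hc
          have := congrArg Fin.val hc
          simp at this
        · rw [hv0, hv _ (fin_ne_zero_of_val_pos m _ (by simp)), if_pos (by exact ht)]
      rw [hz, mul_zero]
    · -- duplicate row, s < t+2 ≤ m+1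
      rw [if_neg (by omega), if_neg (by omega), add_zero]
      have hz : bracket p (m+1) e' = 0 := by
        apply bracket_dup p (m+1) e' 0 ⟨(t:ℕ)+1, by omega⟩
        · intro hc
          have := congrArg Fin.val hc
          simp at this
        · rw [hv0, hv _ (fin_ne_zero_of_val_pos m _ (by simp)),
            if_neg (show ¬((t:ℕ)+1 < s) by omega)]
      rw [hz, mul_zero]
  rw [Finset.sum_congr rfl (fun t _ => hterm t)]
  rw [Fin.sum_univ_eq_sum_range
      (fun i => (if i+2 = s then QC else 0) + (if i+1 = m+1 then QD else 0)) (m+1)]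
  rw [Finset.sum_add_distrib,
    sum_ite_shift p (m+1) (m+1) 2 s (by omega) (by omega) QC,
    sum_ite_shift p (m+1) (m+1) 1 (m+1) one_pos (le_refl _) QD,
    if_pos (by omega : 1 ≤ m+1)]
  by_cases hs3 : 2 ≤ s
  · rw [if_pos hs3]
  · have hs4 : s = 1 := by omega
    subst hs4
    rw [if_neg (by omega)]
    rw [hQC, show ((1:ℕ):ℤ) - 2 = (-1:ℤ) from by norm_num, hQneg (-1) (by norm_num),
      zero_pow (show p^2 ≠ 0 from by have := (Fact.out : p.Prime).two_le; positivity)]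
    ring

end Aux3
theorem stmt12 (p n : ℕ) [Fact p.Prime] (hn : 1 ≤ n)
    (Q : ℤ → MvPolynomial (Fin n) (ZMod p))
    (hQneg : ∀ t : ℤ, t < 0 → Q t = 0)
    (hQ : ∀ s : ℕ, s < n → Lns p n s = Ln p n * Q s)
    (s : ℕ) (hs : s < n) :
    Dop p n (n + 2) (Q s) =
      (-1 : MvPolynomial (Fin n) (ZMod p)) ^ n * Q 0 *
        ((Q ((s : ℤ) - 2)) ^ p ^ 2 - (Q ((s : ℤ) - 1)) ^ p * (Q ((n : ℤ) - 1)) ^ p ^ 2 +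
          ((Q ((n : ℤ) - 1)) ^ (p ^ 2 + p) - (Q ((n : ℤ) - 2)) ^ p ^ 2) * Q s) := by
  obtain ⟨m, rfl⟩ : ∃ m, n = m + 1 := ⟨n - 1, by omega⟩
  simp only [show m + 1 + 2 = m + 3 from rfl]
  have hL : Ln p (m+1) ≠ 0 := Ln_ne_zero p (m+1)
  -- `L_{n,0} = L^p`
  have hLns0 : Lns p (m+1) 0 = Ln p (m+1) ^ p := by
    unfold Lns
    rw [show (fun k : Fin (m+1) => if (k:ℕ) < 0 then (k:ℕ) else (k:ℕ)+1)
        = (fun k : Fin (m+1) => (k:ℕ)+1) from funext (fun k => by rw [if_neg (Nat.not_lt_zero _)]),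
      bracket_frob p (m+1) (fun k : Fin (m+1) => (k:ℕ))]
    rfl
  have hQ0 : Ln p (m+1) * Q 0 = Ln p (m+1) ^ p := by
    have h1 := hQ 0 (by omega)
    rw [hLns0] at h1
    simpa using h1.symm
  -- cancelled Cramer relation
  have hrel : ∀ j0 : Fin (m+1),
      (X j0 : MvPolynomial (Fin (m+1)) (ZMod p)) ^ p ^ (m+1)
        = ∑ t : Fin (m+1), ((-1 : MvPolynomial (Fin (m+1)) (ZMod p)) ^ ((t:ℕ)+m+2)
            * Q ((t:ℕ):ℤ)) * X j0 ^ p ^ (t:ℕ) := by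
    intro j0
    apply mul_left_cancel₀ hL
    calc Ln p (m+1) * (X j0 : MvPolynomial (Fin (m+1)) (ZMod p)) ^ p ^ (m+1)
        = (X j0 : MvPolynomial (Fin (m+1)) (ZMod p)) ^ p ^ (m+1) * Ln p (m+1) := mul_comm _ _
      _ = ∑ t : Fin (m+1), (-1 : MvPolynomial (Fin (m+1)) (ZMod p)) ^ ((t:ℕ) + (m+1) + 1)
            * (Lns p (m+1) (t:ℕ) * X j0 ^ p ^ (t:ℕ)) := row_rel p (m+1) j0
      _ = ∑ t : Fin (m+1), Ln p (m+1)
            * (((-1 : MvPolynomial (Fin (m+1)) (ZMod p)) ^ ((t:ℕ)+m+2) * Q ((t:ℕ):ℤ))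
              * X j0 ^ p ^ (t:ℕ)) := by
          refine Finset.sum_congr rfl fun t _ => ?_
          rw [hQ (t:ℕ) t.isLt,
            neg_one_pow_mod p m ((t:ℕ) + (m+1) + 1) ((t:ℕ)+m+2) (by omega)]
          ring
      _ = Ln p (m+1) * ∑ t : Fin (m+1), ((-1 : MvPolynomial (Fin (m+1)) (ZMod p)) ^ ((t:ℕ)+m+2)
            * Q ((t:ℕ):ℤ)) * X j0 ^ p ^ (t:ℕ) := (Finset.mul_sum _ _ _).symm
  -- Frobenius-squared version
  haveI : ExpChar (MvPolynomial (Fin (m+1)) (ZMod p)) p := ExpChar.prime Fact.out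
  have hneg1 : ((-1 : MvPolynomial (Fin (m+1)) (ZMod p))) ^ (p^2) = -1 :=
    neg_one_pow_char_pow (MvPolynomial (Fin (m+1)) (ZMod p)) p 2
  have hrel2 : ∀ j0 : Fin (m+1),
      (X j0 : MvPolynomial (Fin (m+1)) (ZMod p)) ^ p ^ (m+3)
        = ∑ t : Fin (m+1), ((-1 : MvPolynomial (Fin (m+1)) (ZMod p)) ^ ((t:ℕ)+m+2)
            * Q ((t:ℕ):ℤ) ^ p ^ 2) * X j0 ^ p ^ ((t:ℕ)+2) := by
    intro j0
    set F : MvPolynomial (Fin (m+1)) (ZMod p) →+* MvPolynomial (Fin (m+1)) (ZMod p) :=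
      (frobenius (MvPolynomial (Fin (m+1)) (ZMod p)) p).comp
        (frobenius (MvPolynomial (Fin (m+1)) (ZMod p)) p) with hFdef
    have hF : ∀ x : MvPolynomial (Fin (m+1)) (ZMod p), F x = x ^ p ^ 2 := fun x => by
      rw [hFdef, RingHom.comp_apply, frobenius_def, frobenius_def, ← pow_mul, ← sq]
    have h := congrArg F (hrel j0)
    rw [map_sum] at h
    calc (X j0 : MvPolynomial (Fin (m+1)) (ZMod p)) ^ p ^ (m+3)
        = F ((X j0 : MvPolynomial (Fin (m+1)) (ZMod p)) ^ p ^ (m+1)) := by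
          rw [hF, ← pow_mul, ← pow_add]
      _ = ∑ t : Fin (m+1), F ((((-1 : MvPolynomial (Fin (m+1)) (ZMod p)) ^ ((t:ℕ)+m+2))
            * Q ((t:ℕ):ℤ)) * X j0 ^ p ^ (t:ℕ)) := h
      _ = ∑ t : Fin (m+1), ((-1 : MvPolynomial (Fin (m+1)) (ZMod p)) ^ ((t:ℕ)+m+2)
            * Q ((t:ℕ):ℤ) ^ p ^ 2) * X j0 ^ p ^ ((t:ℕ)+2) := by
          refine Finset.sum_congr rfl fun t _ => ?_
          rw [hF, mul_pow, mul_pow, pow_right_comm, hneg1, ← pow_mul, ← pow_add]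
  have hDL := DL_eval p m Q hQneg hrel2
  have hDQ : Ln p (m+1) * Dop p (m+1) (m+3) (Q (s:ℤ))
      = Dop p (m+1) (m+3) (Lns p (m+1) s)
        - Q (s:ℤ) * Dop p (m+1) (m+3) (Ln p (m+1)) := by
    rw [hQ s hs, Derivation.leibniz, smul_eq_mul, smul_eq_mul]
    ring
  refine mul_left_cancel₀ hL ?_
  rw [hDQ, hDL]
  rw [show ((m+1:ℕ):ℤ) - 1 = (m:ℤ) from by push_cast; ring,
    show ((m+1:ℕ):ℤ) - 2 = (m:ℤ) - 1 from by push_cast; ring]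
  by_cases hs0 : s = 0
  · subst hs0
    have hD0 : Dop p (m+1) (m+3) (Lns p (m+1) 0) = 0 := by
      rw [hLns0, Derivation.leibniz_pow]
      have hp0 : (p : MvPolynomial (Fin (m+1)) (ZMod p)) = 0 :=
        CharP.cast_eq_zero (MvPolynomial (Fin (m+1)) (ZMod p)) p
      simp [nsmul_eq_mul, hp0]
    rw [hD0]
    rw [show ((0:ℕ):ℤ) = (0:ℤ) from rfl]
    rw [show (0:ℤ) - 2 = (-2:ℤ) from by norm_num, show (0:ℤ) - 1 = (-1:ℤ) from by norm_num,
      hQneg (-2) (by norm_num), hQneg (-1) (by norm_num)]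
    rw [hQ m (by omega)]
    have hzp : (0 : MvPolynomial (Fin (m+1)) (ZMod p)) ^ p ^ 2 = 0 :=
      zero_pow (show p^2 ≠ 0 from by have := (Fact.out : p.Prime).two_le; positivity)
    have hzp' : (0 : MvPolynomial (Fin (m+1)) (ZMod p)) ^ p = 0 :=
      zero_pow (show p ≠ 0 from by have := (Fact.out : p.Prime).two_le; omega)
    rw [hzp, hzp']
    linear_combination ((-1 : MvPolynomial (Fin (m+1)) (ZMod p))^m
      * ((Q (m:ℤ) ^ (p^2+p) - Q ((m:ℤ)-1) ^ p ^ 2) * Q ((0:ℕ):ℤ))) * hQ0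
  · have hDLs := DLs_eval p m s (by omega) hs Q hQneg hrel2
    rw [hDLs, hQ m (by omega), hQ (s-1) (by omega),
      show ((s-1:ℕ):ℤ) = (s:ℤ) - 1 from by omega]
    linear_combination ((-1 : MvPolynomial (Fin (m+1)) (ZMod p))^m
      * ((Q ((s:ℤ)-2) ^ p ^ 2 - Q ((s:ℤ)-1) ^ p * Q (m:ℤ) ^ p ^ 2
        + (Q (m:ℤ) ^ (p^2+p) - Q ((m:ℤ)-1) ^ p ^ 2) * Q ((s:ℕ):ℤ)))) * hQ0
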